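/- Let E be a permutation-invariant equivalence relation on Set M. Suppose Y ≠ X, E X Y, Z ⊆ (X ∪ Y)ᶜ, and f : M → M restricts to an injection of Z into X ∩ Y (Set.InjOn f Z and f '' Z ⊆ X ∩ Y). Suppose further that |Z| ⊴ |X \ Y| or |Z| ⊴ |Y \ X|. Then there is a bijection π : M ≃ M such that E (π '' X) X, Z ⊆ π '' (X ∩ Y), and for every x : M, π x ≠ x if and only if x ∈ Z ∪ f '' Z. -/

import Mathlib

/-- Bicardinal equivalence: `X ⊟ Y` iff `|X| = |Y|` and `|Xᶜ| = |Yᶜ|`. -/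
def Bicard {M : Type*} (X Y : Set M) : Prop :=
  Cardinal.mk X = Cardinal.mk Y ∧ Cardinal.mk (Xᶜ : Set M) = Cardinal.mk (Yᶜ : Set M)

/-- `a ⊴ b`: there is `n : ℕ` with `a ≤ n * b`. -/
def Trile (a b : Cardinal) : Prop := ∃ n : ℕ, a ≤ n * b

/-- `a ◁ b`: `a ⊴ b` and not `b ⊴ a`. -/
def Trilt (a b : Cardinal) : Prop := Trile a b ∧ ¬ Trile b a

/-- Permutation invariance of a relation on concepts. -/
def PermInv {M : Type*} (E : Set M → Set M → Prop) : Prop :=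
  ∀ (π : M ≃ M) (X Y : Set M), E X Y ↔ E (π '' X) (π '' Y)

/-- The bicardinal slice `E(⊟)_X` is trivial. -/
def TrivialSlice {M : Type*} (E : Set M → Set M → Prop) (X : Set M) : Prop :=
  ∀ Y Z : Set M, Bicard Y X → Bicard Z X → E Y Z

/-- The bicardinal slice `E(⊟)_X` is separative (refines a separation). -/
def Separative {M : Type*} (E : Set M → Set M → Prop) (X : Set M) : Prop :=
  ∀ Y Z : Set M, Bicard Y X → Bicard Z X → E Y Z →
    Trilt (Cardinal.mk (symmDiff Y Z : Set M)) (Cardinal.mk X)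

/-- The bicardinal slice `E(⊟)_X` is complementative (refines a complementation). -/
def Complementative {M : Type*} (E : Set M → Set M → Prop) (X : Set M) : Prop :=
  ∀ Y Z : Set M, Bicard Y X → Bicard Z X → E Y Z →
    Trilt (Cardinal.mk (symmDiff Y Z : Set M)) (Cardinal.mk X) ∨
      Trilt (Cardinal.mk ((symmDiff Y Z)ᶜ : Set M)) (Cardinal.mk X)

/-- Properly separative: separative and not trivial. -/
def ProperlySeparative {M : Type*} (E : Set M → Set M → Prop) (X : Set M) : Prop :=
  Separative E X ∧ ¬ TrivialSlice E X

/-- Properly complementative: complementative, not separative, and not trivial. -/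
def ProperlyComplementative {M : Type*} (E : Set M → Set M → Prop) (X : Set M) : Prop :=
  Complementative E X ∧ ¬ Separative E X ∧ ¬ TrivialSlice E X


open Function Set
section Aux

section Swap
variable {M : Type*} [Nonempty M] {g : M → M} {B : Set M}

open Classical in
noncomputable def swapVia (g : M → M) (B : Set M) : M → M :=
  fun x => if x ∈ B then g x else if x ∈ g '' B then Function.invFunOn g B x else x

lemma swapVia_apply_mem {x : M} (hx : x ∈ B) : swapVia g B x = g x := by
  simp [swapVia, hx]

lemma swapVia_apply_img (hd : Disjoint B (g '' B)) {x : M} (hx : x ∈ g '' B) :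
    swapVia g B x = Function.invFunOn g B x := by
  have hxB : x ∉ B := Set.disjoint_right.mp hd hx
  simp [swapVia, hxB, hx]

lemma swapVia_apply_notmem {x : M} (hx : x ∉ B) (hx' : x ∉ g '' B) : swapVia g B x = x := by
  simp [swapVia, hx, hx']

lemma swapVia_involutive (hinj : Set.InjOn g B) (hd : Disjoint B (g '' B)) :
    Function.Involutive (swapVia g B) := by
  intro x
  by_cases hx : x ∈ B
  · rw [swapVia_apply_mem hx, swapVia_apply_img hd (mem_image_of_mem g hx)]
    exact hinj.leftInvOn_invFunOn hx
  · by_cases hx' : x ∈ g '' B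
    · obtain ⟨a, ha, rfl⟩ := hx'
      rw [swapVia_apply_img hd ⟨a, ha, rfl⟩]
      have h1 : invFunOn g B (g a) ∈ B := invFunOn_mem ⟨a, ha, rfl⟩
      rw [swapVia_apply_mem h1]
      exact invFunOn_eq ⟨a, ha, rfl⟩
    · rw [swapVia_apply_notmem hx hx', swapVia_apply_notmem hx hx']

lemma invol_image_eq {σ : M → M} (h : Function.Involutive σ) (S : Set M) :
    σ '' S = σ ⁻¹' S := by
  ext x
  constructor
  · rintro ⟨y, hy, rfl⟩; simpa [Set.mem_preimage, h y] using hy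
  · intro hx; exact ⟨σ x, hx, h x⟩

lemma swapVia_image (hinj : Set.InjOn g B) (hd : Disjoint B (g '' B)) (S : Set M)
    (h1 : B ⊆ S) (h2 : Disjoint (g '' B) S) :
    swapVia g B '' S = (S \ B) ∪ g '' B := by
  rw [invol_image_eq (swapVia_involutive hinj hd)]
  ext x
  simp only [Set.mem_preimage, Set.mem_union, Set.mem_diff]
  by_cases hx : x ∈ B
  · rw [swapVia_apply_mem hx]
    have hgx : g x ∈ g '' B := mem_image_of_mem g hx
    have h3 : g x ∉ S := Set.disjoint_left.mp h2 hgx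
    have h4 : x ∉ g '' B := Set.disjoint_left.mp hd hx
    tauto
  · by_cases hx' : x ∈ g '' B
    · rw [swapVia_apply_img hd hx']
      obtain ⟨a, ha, rfl⟩ := hx'
      have h3 : invFunOn g B (g a) ∈ B := invFunOn_mem ⟨a, ha, rfl⟩
      have h4 : invFunOn g B (g a) ∈ S := h1 h3
      have h5 : g a ∈ g '' B := mem_image_of_mem g ha
      tauto
    · rw [swapVia_apply_notmem hx hx']
      tauto

lemma swapVia_image_rev (hinj : Set.InjOn g B) (hd : Disjoint B (g '' B)) (S : Set M)
    (h1 : Disjoint B S) (h2 : g '' B ⊆ S) :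
    swapVia g B '' S = (S \ g '' B) ∪ B := by
  rw [invol_image_eq (swapVia_involutive hinj hd)]
  ext x
  simp only [Set.mem_preimage, Set.mem_union, Set.mem_diff]
  by_cases hx : x ∈ B
  · rw [swapVia_apply_mem hx]
    have hgx : g x ∈ S := h2 (mem_image_of_mem g hx)
    have h4 : x ∉ g '' B := Set.disjoint_left.mp hd hx
    tauto
  · by_cases hx' : x ∈ g '' B
    · rw [swapVia_apply_img hd hx']
      obtain ⟨a, ha, rfl⟩ := hx'
      have h3 : invFunOn g B (g a) ∈ B := invFunOn_mem ⟨a, ha, rfl⟩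
      have h4 : invFunOn g B (g a) ∉ S := Set.disjoint_left.mp h1 h3
      have h5 : g a ∈ g '' B := mem_image_of_mem g ha
      tauto
    · rw [swapVia_apply_notmem hx hx']
      have h3 : x ∉ B := hx
      tauto

lemma swapVia_image_of_subset (hinj : Set.InjOn g B) (hd : Disjoint B (g '' B)) (S : Set M)
    (h1 : B ⊆ S) (h2 : g '' B ⊆ S) :
    swapVia g B '' S = S := by
  rw [invol_image_eq (swapVia_involutive hinj hd)]
  ext x
  simp only [Set.mem_preimage]
  by_cases hx : x ∈ B
  · rw [swapVia_apply_mem hx]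
    exact ⟨fun _ => h1 hx, fun _ => h2 (mem_image_of_mem g hx)⟩
  · by_cases hx' : x ∈ g '' B
    · rw [swapVia_apply_img hd hx']
      obtain ⟨a, ha, rfl⟩ := hx'
      have h3 : invFunOn g B (g a) ∈ B := invFunOn_mem ⟨a, ha, rfl⟩
      exact ⟨fun _ => h2 ⟨a, ha, rfl⟩, fun _ => h1 h3⟩
    · rw [swapVia_apply_notmem hx hx']

lemma swapVia_image_of_disjoint (hinj : Set.InjOn g B) (hd : Disjoint B (g '' B)) (S : Set M)
    (h1 : Disjoint B S) (h2 : Disjoint (g '' B) S) :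
    swapVia g B '' S = S := by
  rw [invol_image_eq (swapVia_involutive hinj hd)]
  ext x
  simp only [Set.mem_preimage]
  by_cases hx : x ∈ B
  · rw [swapVia_apply_mem hx]
    constructor
    · intro h; exact absurd h (Set.disjoint_left.mp h2 (mem_image_of_mem g hx))
    · intro h; exact absurd h (Set.disjoint_left.mp h1 hx)
  · by_cases hx' : x ∈ g '' B
    · rw [swapVia_apply_img hd hx']
      obtain ⟨a, ha, rfl⟩ := hx'
      have h3 : invFunOn g B (g a) ∈ B := invFunOn_mem ⟨a, ha, rfl⟩
      constructor
      · intro h; exact absurd h (Set.disjoint_left.mp h1 h3)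
      · intro h; exact absurd h (Set.disjoint_left.mp h2 ⟨a, ha, rfl⟩)
    · rw [swapVia_apply_notmem hx hx']

noncomputable def swapViaPerm (g : M → M) (B : Set M) (hinj : Set.InjOn g B)
    (hd : Disjoint B (g '' B)) : M ≃ M :=
  (swapVia_involutive hinj hd).toPerm _

@[simp] lemma swapViaPerm_apply (hinj : Set.InjOn g B) (hd : Disjoint B (g '' B)) (x : M) :
    swapViaPerm g B hinj hd x = swapVia g B x := rfl

lemma swapViaPerm_image (hinj : Set.InjOn g B) (hd : Disjoint B (g '' B)) (S : Set M) :
    swapViaPerm g B hinj hd '' S = swapVia g B '' S := rfl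

end Swap



section Chain
variable {M : Type*} [Nonempty M] {E : Set M → Set M → Prop}

/-- Shuttle chain, case via `X \ Y`. -/
lemma shuttle_chain_left
    (hE : Equivalence E) (hPI : PermInv E) (X Y : Set M) (hEXY : E X Y)
    (f g : M → M) (ι : M → ℕ) :
    ∀ (n : ℕ) (Z : Set M), Z ⊆ (X ∪ Y)ᶜ → Set.InjOn f Z → f '' Z ⊆ X ∩ Y →
      (∀ z ∈ Z, ι z < n) → (∀ z ∈ Z, g z ∈ X \ Y) →
      (∀ z₁ ∈ Z, ∀ z₂ ∈ Z, ι z₁ = ι z₂ → g z₁ = g z₂ → z₁ = z₂) →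
      E ((X \ f '' Z) ∪ Z) X := by
  intro n
  induction n with
  | zero =>
    intro Z _ _ _ hlt _ _
    have hZe : Z = ∅ := by
      ext z; simp only [Set.mem_empty_iff_false, iff_false]
      intro hz; exact absurd (hlt z hz) (Nat.not_lt_zero _)
    subst hZe
    simpa using hE.refl X
  | succ n ih =>
    intro Z hZc hfinj hfZ hlt hg hginj
    set Z' : Set M := {z ∈ Z | ι z < n} with hZ'def
    set Zn : Set M := {z ∈ Z | ι z = n} with hZndef
    have hZ'sub : Z' ⊆ Z := fun z hz => hz.1
    have hZnsub : Zn ⊆ Z := fun z hz => hz.1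
    have hZsplit : Z = Z' ∪ Zn := by
      ext z
      simp only [hZ'def, hZndef, Set.mem_union, Set.mem_setOf_eq]
      constructor
      · intro hz
        rcases Nat.lt_succ_iff_lt_or_eq.mp (hlt z hz) with h | h
        · exact Or.inl ⟨hz, h⟩
        · exact Or.inr ⟨hz, h⟩
      · rintro (⟨hz, _⟩ | ⟨hz, _⟩) <;> exact hz
    -- main sub-objects
    set S : Set M := (X \ f '' Z') ∪ Z' with hSdef
    have hS : E S X := ih Z' (fun z hz => hZc (hZ'sub hz)) (hfinj.mono hZ'sub)
      ((Set.image_mono (f := f) hZ'sub).trans hfZ) (fun z hz => hz.2)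
      (fun z hz => hg z (hZ'sub hz))
      (fun z₁ h₁ z₂ h₂ => hginj z₁ (hZ'sub h₁) z₂ (hZ'sub h₂))
    -- basic membership facts
    have hgZn_inj : Set.InjOn g Zn := by
      intro a ha b hb hab
      exact hginj a (hZnsub ha) b (hZnsub hb) (ha.2.trans hb.2.symm) hab
    have hgZnXY : g '' Zn ⊆ X \ Y := by
      rintro _ ⟨a, ha, rfl⟩; exact hg a (hZnsub ha)
    have hfZn : f '' Zn ⊆ X ∩ Y := (Set.image_mono (f := f) hZnsub).trans hfZ
    have hfZ' : f '' Z' ⊆ X ∩ Y := (Set.image_mono (f := f) hZ'sub).trans hfZ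
    have hZnC : Zn ⊆ (X ∪ Y)ᶜ := fun z hz => hZc (hZnsub hz)
    have hZ'C : Z' ⊆ (X ∪ Y)ᶜ := fun z hz => hZc (hZ'sub hz)
    have hZnZ' : Disjoint Zn Z' := by
      rw [Set.disjoint_left]
      rintro a ⟨_, ha2⟩ ⟨_, hb2⟩
      exact absurd hb2 (by omega)
    have hfZnfZ' : Disjoint (f '' Zn) (f '' Z') := by
      rw [Set.disjoint_left]
      rintro _ ⟨a, ha, rfl⟩ ⟨b, hb, hab⟩
      have : a = b := hfinj (hZnsub ha) (hZ'sub hb) hab.symm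
      exact Set.disjoint_left.mp hZnZ' ha (this ▸ hb)
    -- step 1: swap Zn with g '' Zn (both outside Y)
    have hd1 : Disjoint Zn (g '' Zn) := by
      rw [Set.disjoint_left]
      intro a ha hga
      exact (hZnC ha) (Or.inl (hgZnXY hga).1)
    set σ₁ := swapViaPerm g Zn hgZn_inj hd1 with hσ₁def
    have hgZnS : g '' Zn ⊆ S := by
      intro x hx
      exact Or.inl ⟨(hgZnXY hx).1, fun hmem => (hfZ' hmem).2 |> fun h => (hgZnXY hx).2 h⟩
    have hZnS : Disjoint Zn S := by
      rw [Set.disjoint_left]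
      rintro a ha (⟨haX, _⟩ | haZ')
      · exact (hZnC ha) (Or.inl haX)
      · exact Set.disjoint_left.mp hZnZ' ha haZ'
    have himg1 : σ₁ '' S = (S \ g '' Zn) ∪ Zn :=
      swapVia_image_rev hgZn_inj hd1 S hZnS hgZnS
    have himgY1 : σ₁ '' Y = Y := by
      apply swapVia_image_of_disjoint hgZn_inj hd1 Y
      · rw [Set.disjoint_left]; intro a ha hYa; exact (hZnC ha) (Or.inr hYa)
      · rw [Set.disjoint_left]; intro a ha hYa; exact (hgZnXY ha).2 hYa
    set S₁ : Set M := (S \ g '' Zn) ∪ Zn with hS₁def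
    have hS₁Y : E S₁ Y := by
      have h := (hPI σ₁ S Y).mp (hE.trans hS hEXY)
      rwa [himg1, himgY1] at h
    have hS₁ : E S₁ X := hE.trans hS₁Y (hE.symm hEXY)
    -- step 2: swap f '' Zn with g '' Zn (both inside X)
    set g₂ : M → M := fun x => g (Function.invFunOn f Zn x) with hg₂def
    have hg₂inv : ∀ a ∈ Zn, g₂ (f a) = g a := by
      intro a ha
      have : Function.invFunOn f Zn (f a) = a := (hfinj.mono hZnsub).leftInvOn_invFunOn ha
      simp [hg₂def, this]
    have hg₂img : g₂ '' (f '' Zn) = g '' Zn := by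
      ext x
      constructor
      · rintro ⟨_, ⟨a, ha, rfl⟩, rfl⟩
        exact ⟨a, ha, (hg₂inv a ha).symm⟩
      · rintro ⟨a, ha, rfl⟩
        exact ⟨f a, ⟨a, ha, rfl⟩, hg₂inv a ha⟩
    have hg₂inj : Set.InjOn g₂ (f '' Zn) := by
      rintro _ ⟨a, ha, rfl⟩ _ ⟨b, hb, rfl⟩ hab
      rw [hg₂inv a ha, hg₂inv b hb] at hab
      rw [hgZn_inj ha hb hab]
    have hd2 : Disjoint (f '' Zn) (g₂ '' (f '' Zn)) := by
      rw [hg₂img, Set.disjoint_left]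
      intro a ha hga
      exact (hgZnXY hga).2 (hfZn ha).2
    set σ₂ := swapViaPerm g₂ (f '' Zn) hg₂inj hd2 with hσ₂def
    have hfZnS₁ : f '' Zn ⊆ S₁ := by
      intro x hx
      refine Or.inl ⟨Or.inl ⟨(hfZn hx).1, ?_⟩, ?_⟩
      · exact fun h => Set.disjoint_left.mp hfZnfZ' hx h
      · intro h; exact (hgZnXY h).2 (hfZn hx).2
    have hgZnS₁ : Disjoint (g₂ '' (f '' Zn)) S₁ := by
      rw [hg₂img, Set.disjoint_left]
      rintro a ha (⟨_, hnot⟩ | haZn)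
      · exact hnot ha
      · exact (hZnC haZn) (Or.inl (hgZnXY ha).1)
    have himg2 : σ₂ '' S₁ = (S₁ \ f '' Zn) ∪ g '' Zn := by
      rw [swapViaPerm_image, swapVia_image hg₂inj hd2 S₁ hfZnS₁ hgZnS₁, hg₂img]
    have himgX2 : σ₂ '' X = X := by
      apply swapVia_image_of_subset hg₂inj hd2 X
      · exact fun x hx => (hfZn hx).1
      · rw [hg₂img]; exact fun x hx => (hgZnXY hx).1
    have hfinal : E ((S₁ \ f '' Zn) ∪ g '' Zn) X := by
      have h := (hPI σ₂ S₁ X).mp hS₁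
      rwa [himg2, himgX2] at h
    -- final set identity
    have hkey : (S₁ \ f '' Zn) ∪ g '' Zn = (X \ f '' Z) ∪ Z := by
      rw [hSdef] at hS₁def
      rw [hS₁def, hZsplit, Set.image_union]
      ext x
      have h1 : x ∈ g '' Zn → x ∈ X ∧ x ∉ Y := fun h => ⟨(hgZnXY h).1, (hgZnXY h).2⟩
      have h2 : x ∈ f '' Z' → x ∈ X ∧ x ∈ Y := fun h => ⟨(hfZ' h).1, (hfZ' h).2⟩
      have h2' : x ∈ f '' Zn → x ∈ X ∧ x ∈ Y := fun h => ⟨(hfZn h).1, (hfZn h).2⟩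
      have h3 : x ∈ Z' → x ∉ X ∧ x ∉ Y := fun h =>
        ⟨fun hx => (hZ'C h) (Or.inl hx), fun hx => (hZ'C h) (Or.inr hx)⟩
      have h3' : x ∈ Zn → x ∉ X ∧ x ∉ Y := fun h =>
        ⟨fun hx => (hZnC h) (Or.inl hx), fun hx => (hZnC h) (Or.inr hx)⟩
      simp only [Set.mem_union, Set.mem_diff]
      constructor
      · rintro (⟨(⟨(⟨hX, hf'⟩ | hZ'), hgx⟩ | hZn), hfn⟩ | hgx)
        · exact Or.inl ⟨hX, fun h => h.elim hf' hfn⟩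
        · exact Or.inr (Or.inl hZ')
        · exact Or.inr (Or.inr hZn)
        · exact Or.inl ⟨(h1 hgx).1, fun h =>
            (h1 hgx).2 (h.elim (fun hh => (h2 hh).2) (fun hh => (h2' hh).2))⟩
      · rintro (⟨hX, hf⟩ | (hZ' | hZn))
        · by_cases hgx : x ∈ g '' Zn
          · exact Or.inr hgx
          · exact Or.inl ⟨Or.inl ⟨Or.inl ⟨hX, fun h => hf (Or.inl h)⟩, hgx⟩,
              fun h => hf (Or.inr h)⟩
        · exact Or.inl ⟨Or.inl ⟨Or.inr hZ', fun h => (h3 hZ').1 (h1 h).1⟩,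
            fun h => (h3 hZ').2 (h2' h).2⟩
        · exact Or.inl ⟨Or.inr hZn, fun h => (h3' hZn).2 (h2' h).2⟩
    rwa [hkey] at hfinal

end Chain

/-- Shuttle chain, case via `Y \ X`. -/
lemma shuttle_chain_right {M : Type*} [Nonempty M] {E : Set M → Set M → Prop}
    (hE : Equivalence E) (hPI : PermInv E) (X Y : Set M) (hEXY : E X Y)
    (f g : M → M) (ι : M → ℕ) :
    ∀ (n : ℕ) (Z : Set M), Z ⊆ (X ∪ Y)ᶜ → Set.InjOn f Z → f '' Z ⊆ X ∩ Y →
      (∀ z ∈ Z, ι z < n) → (∀ z ∈ Z, g z ∈ Y \ X) →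
      (∀ z₁ ∈ Z, ∀ z₂ ∈ Z, ι z₁ = ι z₂ → g z₁ = g z₂ → z₁ = z₂) →
      E ((X \ f '' Z) ∪ Z) X := by
  intro n
  induction n with
  | zero =>
    intro Z _ _ _ hlt _ _
    have hZe : Z = ∅ := by
      ext z; simp only [Set.mem_empty_iff_false, iff_false]
      intro hz; exact absurd (hlt z hz) (Nat.not_lt_zero _)
    subst hZe
    simpa using hE.refl X
  | succ n ih =>
    intro Z hZc hfinj hfZ hlt hg hginj
    set Z' : Set M := {z ∈ Z | ι z < n} with hZ'def
    set Zn : Set M := {z ∈ Z | ι z = n} with hZndef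
    have hZ'sub : Z' ⊆ Z := fun z hz => hz.1
    have hZnsub : Zn ⊆ Z := fun z hz => hz.1
    have hZsplit : Z = Z' ∪ Zn := by
      ext z
      simp only [hZ'def, hZndef, Set.mem_union, Set.mem_setOf_eq]
      constructor
      · intro hz
        rcases Nat.lt_succ_iff_lt_or_eq.mp (hlt z hz) with h | h
        · exact Or.inl ⟨hz, h⟩
        · exact Or.inr ⟨hz, h⟩
      · rintro (⟨hz, _⟩ | ⟨hz, _⟩) <;> exact hz
    set S : Set M := (X \ f '' Z') ∪ Z' with hSdef
    have hS : E S X := ih Z' (fun z hz => hZc (hZ'sub hz)) (hfinj.mono hZ'sub)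
      ((Set.image_mono (f := f) hZ'sub).trans hfZ) (fun z hz => hz.2)
      (fun z hz => hg z (hZ'sub hz))
      (fun z₁ h₁ z₂ h₂ => hginj z₁ (hZ'sub h₁) z₂ (hZ'sub h₂))
    have hgZn_inj : Set.InjOn g Zn := by
      intro a ha b hb hab
      exact hginj a (hZnsub ha) b (hZnsub hb) (ha.2.trans hb.2.symm) hab
    have hgZnYX : g '' Zn ⊆ Y \ X := by
      rintro _ ⟨a, ha, rfl⟩; exact hg a (hZnsub ha)
    have hfZn : f '' Zn ⊆ X ∩ Y := (Set.image_mono (f := f) hZnsub).trans hfZ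
    have hfZ' : f '' Z' ⊆ X ∩ Y := (Set.image_mono (f := f) hZ'sub).trans hfZ
    have hZnC : Zn ⊆ (X ∪ Y)ᶜ := fun z hz => hZc (hZnsub hz)
    have hZ'C : Z' ⊆ (X ∪ Y)ᶜ := fun z hz => hZc (hZ'sub hz)
    have hZnZ' : Disjoint Zn Z' := by
      rw [Set.disjoint_left]
      rintro a ⟨_, ha2⟩ ⟨_, hb2⟩
      exact absurd hb2 (by omega)
    have hfZnfZ' : Disjoint (f '' Zn) (f '' Z') := by
      rw [Set.disjoint_left]
      rintro _ ⟨a, ha, rfl⟩ ⟨b, hb, hab⟩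
      have : a = b := hfinj (hZnsub ha) (hZ'sub hb) hab.symm
      exact Set.disjoint_left.mp hZnZ' ha (this ▸ hb)
    -- step 1: swap f '' Zn with g '' Zn (both inside Y)
    set g₂ : M → M := fun x => g (Function.invFunOn f Zn x) with hg₂def
    have hg₂inv : ∀ a ∈ Zn, g₂ (f a) = g a := by
      intro a ha
      have : Function.invFunOn f Zn (f a) = a := (hfinj.mono hZnsub).leftInvOn_invFunOn ha
      simp [hg₂def, this]
    have hg₂img : g₂ '' (f '' Zn) = g '' Zn := by
      ext x
      constructor
      · rintro ⟨_, ⟨a, ha, rfl⟩, rfl⟩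
        exact ⟨a, ha, (hg₂inv a ha).symm⟩
      · rintro ⟨a, ha, rfl⟩
        exact ⟨f a, ⟨a, ha, rfl⟩, hg₂inv a ha⟩
    have hg₂inj : Set.InjOn g₂ (f '' Zn) := by
      rintro _ ⟨a, ha, rfl⟩ _ ⟨b, hb, rfl⟩ hab
      rw [hg₂inv a ha, hg₂inv b hb] at hab
      rw [hgZn_inj ha hb hab]
    have hd2 : Disjoint (f '' Zn) (g₂ '' (f '' Zn)) := by
      rw [hg₂img, Set.disjoint_left]
      intro a ha hga
      exact (hgZnYX hga).2 (hfZn ha).1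
    set σ₁ := swapViaPerm g₂ (f '' Zn) hg₂inj hd2 with hσ₁def
    have hfZnS : f '' Zn ⊆ S := by
      intro x hx
      exact Or.inl ⟨(hfZn hx).1, fun h => Set.disjoint_left.mp hfZnfZ' hx h⟩
    have hgZnS : Disjoint (g₂ '' (f '' Zn)) S := by
      rw [hg₂img, Set.disjoint_left]
      rintro a ha (⟨haX, _⟩ | haZ')
      · exact (hgZnYX ha).2 haX
      · exact (hZ'C haZ') (Or.inr (hgZnYX ha).1)
    have himg1 : σ₁ '' S = (S \ f '' Zn) ∪ g '' Zn := by
      rw [swapViaPerm_image, swapVia_image hg₂inj hd2 S hfZnS hgZnS, hg₂img]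
    have himgY1 : σ₁ '' Y = Y := by
      apply swapVia_image_of_subset hg₂inj hd2 Y
      · exact fun x hx => (hfZn hx).2
      · rw [hg₂img]; exact fun x hx => (hgZnYX hx).1
    set S₁ : Set M := (S \ f '' Zn) ∪ g '' Zn with hS₁def
    have hS₁Y : E S₁ Y := by
      have h := (hPI σ₁ S Y).mp (hE.trans hS hEXY)
      rwa [himg1, himgY1] at h
    have hS₁ : E S₁ X := hE.trans hS₁Y (hE.symm hEXY)
    -- step 2: swap Zn with g '' Zn (both outside X)
    have hd1 : Disjoint Zn (g '' Zn) := by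
      rw [Set.disjoint_left]
      intro a ha hga
      exact (hZnC ha) (Or.inr (hgZnYX hga).1)
    set σ₂ := swapViaPerm g Zn hgZn_inj hd1 with hσ₂def
    have hZnS₁ : Disjoint Zn S₁ := by
      rw [Set.disjoint_left]
      rintro a ha (⟨(⟨haX, _⟩ | haZ'), _⟩ | hag)
      · exact (hZnC ha) (Or.inl haX)
      · exact Set.disjoint_left.mp hZnZ' ha haZ'
      · exact Set.disjoint_left.mp hd1 ha hag
    have hgZnS₁ : g '' Zn ⊆ S₁ := fun x hx => Or.inr hx
    have himg2 : σ₂ '' S₁ = (S₁ \ g '' Zn) ∪ Zn :=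
      swapVia_image_rev hgZn_inj hd1 S₁ hZnS₁ hgZnS₁
    have himgX2 : σ₂ '' X = X := by
      apply swapVia_image_of_disjoint hgZn_inj hd1 X
      · rw [Set.disjoint_left]; intro a ha hXa; exact (hZnC ha) (Or.inl hXa)
      · rw [Set.disjoint_left]; intro a ha hXa; exact (hgZnYX ha).2 hXa
    have hfinal : E ((S₁ \ g '' Zn) ∪ Zn) X := by
      have h := (hPI σ₂ S₁ X).mp hS₁
      rwa [himg2, himgX2] at h
    have hkey : (S₁ \ g '' Zn) ∪ Zn = (X \ f '' Z) ∪ Z := by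
      rw [hSdef] at hS₁def
      rw [hS₁def, hZsplit, Set.image_union]
      ext x
      have h1 : x ∈ g '' Zn → x ∈ Y ∧ x ∉ X := fun h => ⟨(hgZnYX h).1, (hgZnYX h).2⟩
      have h2 : x ∈ f '' Z' → x ∈ X ∧ x ∈ Y := fun h => ⟨(hfZ' h).1, (hfZ' h).2⟩
      have h2' : x ∈ f '' Zn → x ∈ X ∧ x ∈ Y := fun h => ⟨(hfZn h).1, (hfZn h).2⟩
      have h3 : x ∈ Z' → x ∉ X ∧ x ∉ Y := fun h =>
        ⟨fun hx => (hZ'C h) (Or.inl hx), fun hx => (hZ'C h) (Or.inr hx)⟩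
      have h3' : x ∈ Zn → x ∉ X ∧ x ∉ Y := fun h =>
        ⟨fun hx => (hZnC h) (Or.inl hx), fun hx => (hZnC h) (Or.inr hx)⟩
      simp only [Set.mem_union, Set.mem_diff]
      constructor
      · rintro (⟨(⟨(⟨hX, hf'⟩ | hZ'), hfn⟩ | hgx), hng⟩ | hZn)
        · exact Or.inl ⟨hX, fun h => h.elim hf' hfn⟩
        · exact Or.inr (Or.inl hZ')
        · exact absurd hgx hng
        · exact Or.inr (Or.inr hZn)
      · rintro (⟨hX, hf⟩ | (hZ' | hZn))
        · exact Or.inl ⟨Or.inl ⟨Or.inl ⟨hX, fun h => hf (Or.inl h)⟩,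
            fun h => hf (Or.inr h)⟩, fun h => (h1 h).2 hX⟩
        · exact Or.inl ⟨Or.inl ⟨Or.inr hZ', fun h => (h3 hZ').2 (h2' h).2⟩,
            fun h => (h3 hZ').2 (h1 h).1⟩
        · exact Or.inr hZn
    rwa [hkey] at hfinal

end Aux

/-- Lemma (shuttling into `X ∩ Y`). -/
theorem shuttle_into_inter {M : Type*} (E : Set M → Set M → Prop)
    (hE : Equivalence E) (hPI : PermInv E) (X Y Z : Set M) (f : M → M)
    (hYX : Y ≠ X) (hEXY : E X Y) (hZ : Z ⊆ (X ∪ Y)ᶜ)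
    (hfinj : Set.InjOn f Z) (hfZ : f '' Z ⊆ X ∩ Y)
    (hcard : Trile (Cardinal.mk Z) (Cardinal.mk (X \ Y : Set M)) ∨
             Trile (Cardinal.mk Z) (Cardinal.mk (Y \ X : Set M))) :
    ∃ π : M ≃ M, E (π '' X) X ∧ Z ⊆ π '' (X ∩ Y) ∧
      ∀ x : M, π x ≠ x ↔ x ∈ Z ∪ f '' Z := by
  classical
  rcases isEmpty_or_nonempty M with hM | hM
  · refine ⟨Equiv.refl M, ?_, ?_, ?_⟩
    · simpa using hE.refl X
    · intro z hz; exact (hM.false z).elim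
    · intro x; exact (hM.false x).elim
  -- main case
  have hextract : ∀ (D : Set M), Trile (Cardinal.mk Z) (Cardinal.mk D) →
      ∃ (ι : M → ℕ) (g : M → M) (n : ℕ), (∀ z ∈ Z, ι z < n) ∧ (∀ z ∈ Z, g z ∈ D) ∧
        (∀ z₁ ∈ Z, ∀ z₂ ∈ Z, ι z₁ = ι z₂ → g z₁ = g z₂ → z₁ = z₂) := by
    intro D hD
    obtain ⟨n, hn⟩ := hD
    have hcardD : (n : Cardinal) * Cardinal.mk D = Cardinal.mk (ULift (Fin n) × D) := by
      rw [Cardinal.mk_prod, Cardinal.mk_uLift, Cardinal.mk_fin, Cardinal.lift_natCast,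
        Cardinal.lift_id, Cardinal.lift_id]
    rw [hcardD, Cardinal.le_def] at hn
    obtain ⟨G⟩ := hn
    refine ⟨fun x => if h : x ∈ Z then ((G ⟨x, h⟩).1.down : ℕ) else 0,
            fun x => if h : x ∈ Z then ((G ⟨x, h⟩).2 : M) else x, n, ?_, ?_, ?_⟩
    · intro z hz
      simp only [dif_pos hz]
      exact (G ⟨z, hz⟩).1.down.isLt
    · intro z hz
      simp only [dif_pos hz]
      exact (G ⟨z, hz⟩).2.2
    · intro z₁ h₁ z₂ h₂ hι hg
      simp only [dif_pos h₁, dif_pos h₂] at hι hg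
      have hG : G ⟨z₁, h₁⟩ = G ⟨z₂, h₂⟩ := by
        apply Prod.ext
        · apply ULift.ext
          exact Fin.ext hι
        · exact Subtype.ext hg
      have := G.injective hG
      exact congrArg Subtype.val this
  have hchain : E ((X \ f '' Z) ∪ Z) X := by
    rcases hcard with h | h
    · obtain ⟨ι, g, n, h1, h2, h3⟩ := hextract _ h
      exact shuttle_chain_left hE hPI X Y hEXY f g ι n Z hZ hfinj hfZ h1 h2 h3
    · obtain ⟨ι, g, n, h1, h2, h3⟩ := hextract _ h
      exact shuttle_chain_right hE hPI X Y hEXY f g ι n Z hZ hfinj hfZ h1 h2 h3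
  -- the permutation
  have hdZ : Disjoint Z (f '' Z) := by
    rw [Set.disjoint_left]
    intro a ha hfa
    exact (hZ ha) (Or.inl (hfZ hfa).1)
  have hZX : Disjoint Z X := by
    rw [Set.disjoint_left]
    intro a ha hXa
    exact (hZ ha) (Or.inl hXa)
  refine ⟨swapViaPerm f Z hfinj hdZ, ?_, ?_, ?_⟩
  · have himg : swapViaPerm f Z hfinj hdZ '' X = (X \ f '' Z) ∪ Z :=
      swapVia_image_rev hfinj hdZ X hZX (fun x hx => (hfZ hx).1)
    rwa [himg]
  · have himg : swapViaPerm f Z hfinj hdZ '' (X ∩ Y) = ((X ∩ Y) \ f '' Z) ∪ Z := by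
      apply swapVia_image_rev hfinj hdZ (X ∩ Y) _ hfZ
      rw [Set.disjoint_left]
      intro a ha hXY
      exact (hZ ha) (Or.inl hXY.1)
    rw [himg]
    exact Set.subset_union_right
  · intro x
    constructor
    · intro hne
      by_contra hx
      simp only [Set.mem_union, not_or] at hx
      exact hne (swapVia_apply_notmem hx.1 hx.2)
    · rintro (hx | hx)
      · rw [swapViaPerm_apply, swapVia_apply_mem hx]
        intro he
        have : x ∈ f '' Z := he ▸ Set.mem_image_of_mem f hx
        exact Set.disjoint_left.mp hdZ hx this
      · rw [swapViaPerm_apply, swapVia_apply_img hdZ hx]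
        intro he
        have hmem : Function.invFunOn f Z x ∈ Z := Function.invFunOn_mem
          ((Set.mem_image _ _ _).mp hx)
        rw [he] at hmem
        exact Set.disjoint_left.mp hdZ hmem hx
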